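/- For an integer k ≥ 1, let T_k ⊆ ℝ^3 be the simplex with vertices 0, e_1, e_1 + k e_2 and k e_3. Then #(T_k) = 2(k+1), #(T_k ∩ e_1^⊥) = k+1, and #(T_k ∩ e_2^⊥) = #(T_k ∩ e_3^⊥) = k+2. -/

import Mathlib

open scoped BigOperators

/-- The lattice point enumerator: the number of integer points in `A ⊆ ℝ^3`. -/
noncomputable def latCount (A : Set (Fin 3 → ℝ)) : ℕ :=
  (A ∩ {x : Fin 3 → ℝ | ∀ i, ∃ z : ℤ, x i = (z : ℝ)}).ncard

/-- The simplex `T_k = conv{0, e₁, e₁ + k e₂, k e₃} ⊆ ℝ³`. -/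
noncomputable def Tsimplex (k : ℕ) : Set (Fin 3 → ℝ) :=
  convexHull ℝ {(0 : Fin 3 → ℝ), ![1, 0, 0], ![1, (k : ℝ), 0], ![0, 0, (k : ℝ)]}

/-! ### Auxiliary definitions and lemmas -/

def pt0 (j : ℕ) : Fin 3 → ℝ := ![0, 0, (j : ℝ)]
def pt1 (j : ℕ) : Fin 3 → ℝ := ![1, (j : ℝ), 0]

noncomputable def Lset (k : ℕ) : Finset (Fin 3 → ℝ) :=
  (Finset.range (k+1)).image pt0 ∪ (Finset.range (k+1)).image pt1

lemma mem_Lset (k : ℕ) (x : Fin 3 → ℝ) :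
    x ∈ Lset k ↔ (∃ j ≤ k, x = pt0 j) ∨ (∃ j ≤ k, x = pt1 j) := by
  simp [Lset, Finset.mem_union, Finset.mem_image, Finset.mem_range, Nat.lt_succ_iff, eq_comm]

@[simp] lemma pt0_0 (j : ℕ) : pt0 j 0 = 0 := rfl
@[simp] lemma pt0_1 (j : ℕ) : pt0 j 1 = 0 := rfl
@[simp] lemma pt0_2 (j : ℕ) : pt0 j 2 = (j : ℝ) := rfl
@[simp] lemma pt1_0 (j : ℕ) : pt1 j 0 = 1 := rfl
@[simp] lemma pt1_1 (j : ℕ) : pt1 j 1 = (j : ℝ) := rfl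
@[simp] lemma pt1_2 (j : ℕ) : pt1 j 2 = 0 := rfl

lemma pt0_inj : Function.Injective pt0 := by
  intro a b h
  have := congrFun h 2
  simpa using this

lemma pt1_inj : Function.Injective pt1 := by
  intro a b h
  have := congrFun h 1
  simpa using this

lemma card_Lset (k : ℕ) : (Lset k).card = 2 * (k + 1) := by
  rw [Lset, Finset.card_union_of_disjoint, Finset.card_image_of_injective _ pt0_inj,
    Finset.card_image_of_injective _ pt1_inj, Finset.card_range]
  · ring
  · rw [Finset.disjoint_left]
    rintro a ha hb
    simp only [Finset.mem_image] at ha hb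
    obtain ⟨j, _, rfl⟩ := ha
    obtain ⟨j', _, hj'⟩ := hb
    have := congrFun hj' 0
    simp at this

lemma mem_T (k : ℕ) (hk : 1 ≤ k) (x : Fin 3 → ℝ) :
    x ∈ Tsimplex k ↔ 0 ≤ x 1 ∧ x 1 ≤ k * x 0 ∧ 0 ≤ x 2 ∧ k * x 0 + x 2 ≤ k := by
  have hk0 : (0:ℝ) < k := by exact_mod_cast hk
  constructor
  · intro hx
    have hconv : Convex ℝ {y : Fin 3 → ℝ | 0 ≤ y 1 ∧ y 1 ≤ k * y 0 ∧ 0 ≤ y 2 ∧ k * y 0 + y 2 ≤ k} := by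
      intro u hu v hv a b ha hb hab
      obtain ⟨h1, h2, h3, h4⟩ := hu
      obtain ⟨g1, g2, g3, g4⟩ := hv
      refine ⟨?_, ?_, ?_, ?_⟩ <;>
        simp only [Pi.add_apply, Pi.smul_apply, smul_eq_mul] <;> nlinarith
    have hsub : ({(0 : Fin 3 → ℝ), ![1, 0, 0], ![1, (k : ℝ), 0], ![0, 0, (k : ℝ)]} : Set (Fin 3 → ℝ))
        ⊆ {y : Fin 3 → ℝ | 0 ≤ y 1 ∧ y 1 ≤ k * y 0 ∧ 0 ≤ y 2 ∧ k * y 0 + y 2 ≤ k} := by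
      rintro y (rfl | rfl | rfl | rfl) <;> simp
    exact convexHull_min hsub hconv hx
  · rintro ⟨h1, h2, h3, h4⟩
    have h0 : 0 ≤ x 0 := by nlinarith
    set w : Fin 4 → ℝ := ![k - k * x 0 - x 2, k * x 0 - x 1, x 1, x 2] with hw
    set z : Fin 4 → (Fin 3 → ℝ) := ![(0 : Fin 3 → ℝ), ![1, 0, 0], ![1, (k : ℝ), 0], ![0, 0, (k : ℝ)]] with hz
    have hws : ∑ i, w i = k := by
      simp [hw, Fin.sum_univ_four]; ring
    have hmem := Finset.centerMass_mem_convexHull (Finset.univ : Finset (Fin 4))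
      (w := w) (z := z)
      (s := {(0 : Fin 3 → ℝ), ![1, 0, 0], ![1, (k : ℝ), 0], ![0, 0, (k : ℝ)]}) ?_ ?_ ?_
    · convert hmem using 1
      · rfl
      rw [Finset.centerMass, hws]
      funext i
      fin_cases i <;>
        simp [hw, hz, Fin.sum_univ_four] <;> field_simp <;> ring
    · intro i _
      fin_cases i <;> simp [hw] <;> nlinarith
    · rw [hws]; exact hk0
    · intro i _
      fin_cases i <;> simp [hz, Set.mem_insert_iff]

lemma lat_T (k : ℕ) (hk : 1 ≤ k) :
    Tsimplex k ∩ {x : Fin 3 → ℝ | ∀ i, ∃ z : ℤ, x i = (z : ℝ)} = ↑(Lset k) := by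
  ext x
  simp only [Set.mem_inter_iff, Set.mem_setOf_eq, Finset.coe_sort_coe, Finset.mem_coe,
    mem_Lset, mem_T k hk]
  constructor
  · rintro ⟨⟨h1, h2, h3, h4⟩, hz⟩
    obtain ⟨z0, hz0⟩ := hz 0
    obtain ⟨z1, hz1⟩ := hz 1
    obtain ⟨z2, hz2⟩ := hz 2
    rw [hz1] at h1 h2
    rw [hz0] at h2 h4
    rw [hz2] at h3 h4
    have i1 : (0:ℤ) ≤ z1 := by exact_mod_cast h1
    have i2 : z1 ≤ (k:ℤ) * z0 := by exact_mod_cast h2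
    have i3 : (0:ℤ) ≤ z2 := by exact_mod_cast h3
    have i4 : (k:ℤ) * z0 + z2 ≤ (k:ℤ) := by exact_mod_cast h4
    have hk' : (1:ℤ) ≤ (k:ℤ) := by exact_mod_cast hk
    have hz0l : 0 ≤ z0 := by nlinarith
    have hz0u : z0 ≤ 1 := by nlinarith
    interval_cases z0
    · left
      refine ⟨z2.toNat, ?_, ?_⟩
      · omega
      · have e1 : z1 = 0 := by omega
        funext i
        fin_cases i <;> simp [pt0, hz0, hz1, hz2, e1]
        exact_mod_cast (Int.toNat_of_nonneg i3).symm
    · right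
      refine ⟨z1.toNat, ?_, ?_⟩
      · omega
      · have e2 : z2 = 0 := by omega
        funext i
        fin_cases i <;> simp [pt1, hz0, hz1, hz2, e2]
        exact_mod_cast (Int.toNat_of_nonneg i1).symm
  · rintro (⟨j, hj, rfl⟩ | ⟨j, hj, rfl⟩)
    · refine ⟨⟨?_, ?_, ?_, ?_⟩, ?_⟩
      · simp [pt0]
      · simp [pt0]
      · simp [pt0]
      · simp [pt0]; exact_mod_cast hj
      · refine fun i => ?_
        fin_cases i
        exacts [⟨0, by simp [pt0]⟩, ⟨0, by simp [pt0]⟩, ⟨j, by simp [pt0]⟩]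
    · refine ⟨⟨?_, ?_, ?_, ?_⟩, ?_⟩
      · simp [pt1]
      · simp [pt1]; exact_mod_cast hj
      · simp [pt1]
      · simp [pt1]
      · refine fun i => ?_
        fin_cases i
        exacts [⟨1, by simp [pt1]⟩, ⟨j, by simp [pt1]⟩, ⟨0, by simp [pt1]⟩]

lemma latCount_inter (k : ℕ) (hk : 1 ≤ k) (H : Set (Fin 3 → ℝ)) :
    latCount (Tsimplex k ∩ H) = ((↑(Lset k) : Set (Fin 3 → ℝ)) ∩ H).ncard := by
  unfold latCount
  congr 1
  rw [Set.inter_right_comm, lat_T k hk]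

/-- Lattice point counts for the simplex `T_k`: `#(T_k) = 2(k+1)`,
`#(T_k ∩ e₁^⊥) = k+1` and `#(T_k ∩ e₂^⊥) = #(T_k ∩ e₃^⊥) = k+2`. -/
theorem simplex_counts (k : ℕ) (hk : 1 ≤ k) :
    latCount (Tsimplex k) = 2 * (k + 1) ∧
    latCount (Tsimplex k ∩ {x : Fin 3 → ℝ | x 0 = 0}) = k + 1 ∧
    latCount (Tsimplex k ∩ {x : Fin 3 → ℝ | x 1 = 0}) = k + 2 ∧
    latCount (Tsimplex k ∩ {x : Fin 3 → ℝ | x 2 = 0}) = k + 2 := by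
  refine ⟨?_, ?_, ?_, ?_⟩
  · unfold latCount
    rw [lat_T k hk, Set.ncard_coe_finset, card_Lset]
  · rw [latCount_inter k hk]
    have : (↑(Lset k) : Set (Fin 3 → ℝ)) ∩ {x : Fin 3 → ℝ | x 0 = 0}
        = ↑((Finset.range (k+1)).image pt0) := by
      ext x
      simp only [Set.mem_inter_iff, Finset.mem_coe, mem_Lset, Set.mem_setOf_eq,
        Finset.mem_image, Finset.mem_range, Nat.lt_succ_iff]
      constructor
      · rintro ⟨(⟨j, hj, rfl⟩ | ⟨j, hj, rfl⟩), h0⟩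
        · exact ⟨j, hj, rfl⟩
        · simp at h0
      · rintro ⟨j, hj, rfl⟩
        exact ⟨Or.inl ⟨j, hj, rfl⟩, by simp⟩
    rw [this, Set.ncard_coe_finset, Finset.card_image_of_injective _ pt0_inj,
      Finset.card_range]
  · rw [latCount_inter k hk]
    have : (↑(Lset k) : Set (Fin 3 → ℝ)) ∩ {x : Fin 3 → ℝ | x 1 = 0}
        = ↑((Finset.range (k+1)).image pt0 ∪ {pt1 0}) := by
      ext x
      simp only [Set.mem_inter_iff, Finset.mem_coe, mem_Lset, Set.mem_setOf_eq,
        Finset.mem_union, Finset.mem_image, Finset.mem_range, Nat.lt_succ_iff,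
        Finset.mem_singleton]
      constructor
      · rintro ⟨(⟨j, hj, rfl⟩ | ⟨j, hj, rfl⟩), h0⟩
        · exact Or.inl ⟨j, hj, rfl⟩
        · simp only [pt1_1] at h0
          have : j = 0 := by exact_mod_cast h0
          subst this
          exact Or.inr rfl
      · rintro (⟨j, hj, rfl⟩ | rfl)
        · exact ⟨Or.inl ⟨j, hj, rfl⟩, by simp⟩
        · exact ⟨Or.inr ⟨0, Nat.zero_le _, rfl⟩, by simp⟩
    rw [this, Set.ncard_coe_finset, Finset.card_union_of_disjoint,
      Finset.card_image_of_injective _ pt0_inj, Finset.card_range, Finset.card_singleton]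
    rw [Finset.disjoint_left]
    rintro a ha hb
    simp only [Finset.mem_image] at ha
    simp only [Finset.mem_singleton] at hb
    obtain ⟨j, _, rfl⟩ := ha
    have := congrFun hb 0
    simp at this
  · rw [latCount_inter k hk]
    have : (↑(Lset k) : Set (Fin 3 → ℝ)) ∩ {x : Fin 3 → ℝ | x 2 = 0}
        = ↑(({pt0 0} : Finset (Fin 3 → ℝ)) ∪ (Finset.range (k+1)).image pt1) := by
      ext x
      simp only [Set.mem_inter_iff, Finset.mem_coe, mem_Lset, Set.mem_setOf_eq,
        Finset.mem_union, Finset.mem_image, Finset.mem_range, Nat.lt_succ_iff,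
        Finset.mem_singleton]
      constructor
      · rintro ⟨(⟨j, hj, rfl⟩ | ⟨j, hj, rfl⟩), h0⟩
        · simp only [pt0_2] at h0
          have : j = 0 := by exact_mod_cast h0
          subst this
          exact Or.inl rfl
        · exact Or.inr ⟨j, hj, rfl⟩
      · rintro (rfl | ⟨j, hj, rfl⟩)
        · exact ⟨Or.inl ⟨0, Nat.zero_le _, rfl⟩, by simp⟩
        · exact ⟨Or.inr ⟨j, hj, rfl⟩, by simp⟩
    rw [this, Set.ncard_coe_finset, Finset.card_union_of_disjoint,
      Finset.card_image_of_injective _ pt1_inj, Finset.card_range, Finset.card_singleton]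
    · omega
    rw [Finset.disjoint_left]
    rintro a ha hb
    simp only [Finset.mem_singleton] at ha
    simp only [Finset.mem_image] at hb
    obtain ⟨j, _, hj⟩ := hb
    subst ha
    have := congrFun hj 0
    simp at this
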